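/- Let k be a field of characteristic ≠ 2 and H = (kC₂)* the dual of the group algebra of the cyclic group of order 2, with basis {p_e, p_g} of orthogonal idempotents. Then the universal partial representation algebra H_par is isomorphic to the 3-dimensional commutative algebra k[x]/⟨x(2x-1)(x-1)⟩, where x corresponds to the class [p_e]. -/

import Mathlib

/-- The generator of the tensor algebra `T(H)` corresponding to the basis
idempotent `p_e` of `H = (kC₂)*`. -/
noncomputable def pe (k : Type*) [Field k] : FreeAlgebra k Bool :=
  FreeAlgebra.ι k true

/-- The generator of the tensor algebra `T(H)` corresponding to the basis
idempotent `p_g` of `H = (kC₂)*`. -/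
noncomputable def pg (k : Type*) [Field k] : FreeAlgebra k Bool :=
  FreeAlgebra.ι k false

/-- The defining relations of `H_par` for `H = (kC₂)*`, obtained by
evaluating the relations `[1_H] = 1`, `[h][k₁][S(k₂)] = [hk₁][S(k₂)]` and
`[h₁][S(h₂)][k] = [h₁][S(h₂)k]` on the basis `{p_e, p_g}` (here `S = id`,
`Δ(p_e) = p_e⊗p_e + p_g⊗p_g`, `Δ(p_g) = p_e⊗p_g + p_g⊗p_e`, `1_H = p_e+p_g`,
`p_e² = p_e`, `p_g² = p_g`, `p_ep_g = 0`; the remaining two families of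
relations coincide with these since `H` is commutative and cocommutative). -/
inductive HparRel (k : Type*) [Field k] :
    FreeAlgebra k Bool → FreeAlgebra k Bool → Prop
  | unit : HparRel k (pe k + pg k) 1
  | r2ee : HparRel k (pe k * pe k * pe k + pe k * pg k * pg k) (pe k * pe k)
  | r2eg : HparRel k (pe k * pe k * pg k + pe k * pg k * pe k) (pe k * pg k)
  | r2ge : HparRel k (pg k * pe k * pe k + pg k * pg k * pg k) (pg k * pg k)
  | r2gg : HparRel k (pg k * pe k * pg k + pg k * pg k * pe k) (pg k * pe k)
  | r3ee : HparRel k (pe k * pe k * pe k + pg k * pg k * pe k) (pe k * pe k)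
  | r3eg : HparRel k (pe k * pe k * pg k + pg k * pg k * pg k) (pg k * pg k)
  | r3ge : HparRel k (pe k * pg k * pe k + pg k * pe k * pe k) (pg k * pe k)
  | r3gg : HparRel k (pe k * pg k * pg k + pg k * pe k * pg k) (pe k * pg k)

/-- For `k` of characteristic `≠ 2` and `H = (kC₂)*`, the universal partial
representation algebra `H_par` (the quotient of `T(H)` by the partial
representation relations) is isomorphic to the 3-dimensional commutative
algebra `k[x]/⟨x(2x-1)(x-1)⟩`, with `x` corresponding to the class `[p_e]`. -/
noncomputable abbrev fpoly (k : Type*) [Field k] : Polynomial k :=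
  Polynomial.X * (2 * Polynomial.X - 1) * (Polynomial.X - 1)

noncomputable def toAdj (k : Type*) [Field k] :
    FreeAlgebra k Bool →ₐ[k] AdjoinRoot (fpoly k) :=
  FreeAlgebra.lift k (fun b =>
    if b then AdjoinRoot.root (fpoly k) else 1 - AdjoinRoot.root (fpoly k))

lemma toAdj_rel (k : Type*) [Field k] ⦃x y : FreeAlgebra k Bool⦄
    (h : HparRel k x y) : toAdj k x = toAdj k y := by
  have hroot : (AdjoinRoot.root (fpoly k)) * (2 * AdjoinRoot.root (fpoly k) - 1) *
      (AdjoinRoot.root (fpoly k) - 1) = 0 := by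
    have h0 : AdjoinRoot.mk (fpoly k) (fpoly k) = 0 := AdjoinRoot.mk_self
    simpa only [fpoly, map_mul, map_sub, map_one, map_ofNat, AdjoinRoot.mk_X] using h0
  induction h <;>
    simp only [toAdj, pe, pg, map_add, map_mul, map_one, FreeAlgebra.lift_ι_apply,
      if_true, if_false, Bool.false_eq_true, reduceIte] <;>
    first
    | ring1
    | linear_combination hroot
    | linear_combination -hroot
    | linear_combination 2*hroot
    | linear_combination -2*hroot

example := 1

noncomputable def phi0 (k : Type*) [Field k] :
    RingQuot (HparRel k) →ₐ[k] AdjoinRoot (fpoly k) :=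
  RingQuot.liftAlgHom k ⟨toAdj k, toAdj_rel k⟩

lemma cubic_aux {R : Type*} [Ring R] (a : R)
    (h2 : a * a * a + a * (1 - a) * (1 - a) = a * a) :
    a * (2 * a - 1) * (a - 1) = 0 := by
  calc a * (2 * a - 1) * (a - 1)
      = (a * a * a + a * (1 - a) * (1 - a)) - a * a := by noncomm_ring
    _ = a * a - a * a := by rw [h2]
    _ = 0 := sub_self _

lemma aeval_pe (k : Type*) [Field k] :
    Polynomial.aeval (RingQuot.mkAlgHom k (HparRel k) (pe k)) (fpoly k) = 0 := by
  set a := RingQuot.mkAlgHom k (HparRel k) (pe k) with ha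
  set b := RingQuot.mkAlgHom k (HparRel k) (pg k) with hb
  have h1 : a + b = 1 := by
    have := RingQuot.mkAlgHom_rel k (HparRel.unit (k := k))
    simpa [map_add] using this
  have h2 : a * a * a + a * b * b = a * a := by
    have := RingQuot.mkAlgHom_rel k (HparRel.r2ee (k := k))
    simpa [map_add, map_mul] using this
  have hb' : b = 1 - a := eq_sub_of_add_eq' h1
  rw [hb'] at h2
  have hev : Polynomial.aeval a (fpoly k) = a * (2 * a - 1) * (a - 1) := by
    simp [fpoly, map_mul, map_sub, map_one, map_ofNat]
  rw [hev]
  exact cubic_aux a h2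

noncomputable def psi0 (k : Type*) [Field k] :
    AdjoinRoot (fpoly k) →ₐ[k] RingQuot (HparRel k) :=
  Ideal.Quotient.liftₐ (Ideal.span {fpoly k})
    (Polynomial.aeval (RingQuot.mkAlgHom k (HparRel k) (pe k)))
    (by
      intro p hp
      rw [Ideal.mem_span_singleton] at hp
      obtain ⟨q, rfl⟩ := hp
      rw [map_mul, aeval_pe, zero_mul])

lemma psi0_root (k : Type*) [Field k] :
    psi0 k (AdjoinRoot.root (fpoly k)) =
      RingQuot.mkAlgHom k (HparRel k) (pe k) := by
  show psi0 k (AdjoinRoot.mk (fpoly k) Polynomial.X) = _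
  show Ideal.Quotient.liftₐ _ _ _ (Ideal.Quotient.mk _ Polynomial.X) = _
  rw [Ideal.Quotient.liftₐ_apply]
  exact Polynomial.aeval_X _

theorem stmt19 (k : Type*) [Field k] (hchar : (2 : k) ≠ 0) :
    ∃ φ : RingQuot (HparRel k) ≃ₐ[k]
        AdjoinRoot (Polynomial.X * (2 * Polynomial.X - 1) *
          (Polynomial.X - 1) : Polynomial k),
      φ (RingQuot.mkAlgHom k (HparRel k) (pe k)) =
        AdjoinRoot.root (Polynomial.X * (2 * Polynomial.X - 1) *
          (Polynomial.X - 1) : Polynomial k) := by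
  have hphi_pe : phi0 k (RingQuot.mkAlgHom k (HparRel k) (pe k)) =
      AdjoinRoot.root (fpoly k) := by
    rw [phi0, RingQuot.liftAlgHom_mkAlgHom_apply]
    simp [toAdj, pe]
  have hphi_pg : phi0 k (RingQuot.mkAlgHom k (HparRel k) (pg k)) =
      1 - AdjoinRoot.root (fpoly k) := by
    rw [phi0, RingQuot.liftAlgHom_mkAlgHom_apply]
    simp [toAdj, pg]
  refine ⟨AlgEquiv.ofAlgHom (phi0 k) (psi0 k) ?_ ?_, ?_⟩
  · apply AdjoinRoot.algHom_ext
    rw [AlgHom.comp_apply, psi0_root, hphi_pe]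
    rfl
  · apply RingQuot.ringQuot_ext'
    apply FreeAlgebra.hom_ext
    funext b
    cases b <;>
      simp only [Function.comp_apply, AlgHom.comp_apply, AlgHom.id_apply]
    · show (psi0 k) ((phi0 k) (RingQuot.mkAlgHom k (HparRel k) (pg k))) = _
      rw [hphi_pg, map_sub, map_one, psi0_root]
      have h1 : RingQuot.mkAlgHom k (HparRel k) (pe k) +
          RingQuot.mkAlgHom k (HparRel k) (pg k) = 1 := by
        have := RingQuot.mkAlgHom_rel k (HparRel.unit (k := k))
        simpa [map_add] using this
      exact (eq_sub_of_add_eq' h1).symm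
    · show (psi0 k) ((phi0 k) (RingQuot.mkAlgHom k (HparRel k) (pe k))) = _
      rw [hphi_pe, psi0_root]
      rfl
  · show phi0 k ((RingQuot.mkAlgHom k (HparRel k)) (pe k)) = _
    exact hphi_pe
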